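/- arXiv:math/0604185 — 5 statements merged into one kernel-verified Lean document; each statement's English description precedes it below -/
import Mathlib

section
/- Let ω be a modulus of continuity with ω(2ξ) ≤ (3/2) ω(ξ) for a given ξ > 0. Then (1/π) ∫_{ξ/2}^∞ (ω(2η+ξ) − ω(2η−ξ) − 2ω(ξ))/η² dη ≤ −(1/π) · ω(ξ)/ξ. -/
open MeasureTheory Set Real

lemma concave_superadd {ω : ℝ → ℝ} (hconc : ConcaveOn ℝ (Ici 0) ω)
    {x y : ℝ} (hx : 0 ≤ x) (hy : 0 ≤ y) :
    ω (x + y) + ω 0 ≤ ω x + ω y := by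
  rcases eq_or_lt_of_le (add_nonneg hx hy) with h | h
  · have hx0 : x = 0 := by linarith [hx, hy]
    have hy0 : y = 0 := by linarith
    simp [hx0, hy0, ← h]
  · have hs : 0 < x + y := h
    have ha : (0:ℝ) ≤ x / (x + y) := div_nonneg hx hs.le
    have hb : (0:ℝ) ≤ y / (x + y) := div_nonneg hy hs.le
    have hab : x / (x + y) + y / (x + y) = 1 := by field_simp
    have H1 := hconc.2 (mem_Ici.2 hs.le) (mem_Ici.2 le_rfl) ha hb hab
    have H2 := hconc.2 (mem_Ici.2 hs.le) (mem_Ici.2 le_rfl) hb ha (by linarith)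
    simp only [smul_eq_mul, mul_zero, add_zero] at H1 H2
    have e1 : x / (x + y) * (x + y) = x := by field_simp
    have e2 : y / (x + y) * (x + y) = y := by field_simp
    rw [e1] at H1; rw [e2] at H2
    have e3 : x / (x + y) * ω (x + y) + y / (x + y) * ω (x + y) = ω (x + y) := by
      rw [← add_mul, hab, one_mul]
    have e4 : x / (x + y) * ω 0 + y / (x + y) * ω 0 = ω 0 := by
      rw [← add_mul, hab, one_mul]
    linarith

theorem dissipation_tail_estimate
    (ω : ℝ → ℝ)
    (hconc : ConcaveOn ℝ (Ici 0) ω)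
    (hmono : MonotoneOn ω (Ici 0))
    (hcont : ContinuousOn ω (Ici 0))
    (h0 : ω 0 = 0)
    (ξ : ℝ) (hξ : 0 < ξ) (hpos : 0 < ω ξ)
    (hdbl : ω (2 * ξ) ≤ (3 / 2) * ω ξ)
    (hint : IntegrableOn
      (fun η => (ω (2 * η + ξ) - ω (2 * η - ξ) - 2 * ω ξ) / η ^ 2) (Ioi (ξ / 2))) :
    (1 / π) * ∫ η in Ioi (ξ / 2),
        (ω (2 * η + ξ) - ω (2 * η - ξ) - 2 * ω ξ) / η ^ 2
      ≤ -(1 / π) * (ω ξ / ξ) := by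
  have hc : ξ / 2 > 0 := by linarith
  -- integrability of the majorant
  have hint2 : IntegrableOn (fun η : ℝ => (-(ω ξ) / 2) / η ^ 2) (Ioi (ξ / 2)) := by
    have h : IntegrableOn (fun x : ℝ => -(ω ξ) / 2 * x ^ (-2 : ℝ)) (Ioi (ξ / 2)) :=
      (integrableOn_Ioi_rpow_of_lt (by norm_num : (-2:ℝ) < -1) hc).const_mul (-(ω ξ) / 2)
    refine h.congr_fun (fun x hx => ?_) measurableSet_Ioi
    have hx0 : (0:ℝ) < x := lt_trans hc hx
    dsimp only
    rw [rpow_neg hx0.le, ← rpow_natCast x 2]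
    push_cast
    ring
  -- pointwise bound
  have hpt : ∀ x ∈ Ioi (ξ / 2),
      (ω (2 * x + ξ) - ω (2 * x - ξ) - 2 * ω ξ) / x ^ 2 ≤ (-(ω ξ) / 2) / x ^ 2 := by
    intro x hx
    have hx0 : (0:ℝ) < x := lt_trans hc hx
    have hxξ : 0 ≤ 2 * x - ξ := by
      have := mem_Ioi.mp hx; linarith
    have hsup := concave_superadd hconc hxξ (by linarith : (0:ℝ) ≤ 2 * ξ)
    have key : ω (2 * x + ξ) - ω (2 * x - ξ) - 2 * ω ξ ≤ -(ω ξ) / 2 := by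
      have : (2 * x - ξ) + 2 * ξ = 2 * x + ξ := by ring
      rw [this, h0] at hsup
      linarith
    have hx2 : (0:ℝ) < x ^ 2 := by positivity
    exact (div_le_div_iff_of_pos_right hx2).mpr key
  have hmonoI : (∫ η in Ioi (ξ / 2),
      (ω (2 * η + ξ) - ω (2 * η - ξ) - 2 * ω ξ) / η ^ 2)
      ≤ ∫ η in Ioi (ξ / 2), (-(ω ξ) / 2) / η ^ 2 :=
    setIntegral_mono_on hint hint2 measurableSet_Ioi hpt
  have hval : (∫ η in Ioi (ξ / 2), (-(ω ξ) / 2) / η ^ 2) = -(ω ξ) / ξ := by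
    have hcong : ∀ x ∈ Ioi (ξ / 2), (-(ω ξ) / 2) / x ^ 2 = (-(ω ξ) / 2) * x ^ (-2 : ℝ) := by
      intro x hx
      have hx0 : (0:ℝ) < x := lt_trans hc hx
      rw [rpow_neg hx0.le, ← rpow_natCast x 2]
      push_cast
      ring
    rw [setIntegral_congr_fun measurableSet_Ioi hcong, integral_const_mul,
      integral_Ioi_rpow_of_lt (by norm_num : (-2:ℝ) < -1) hc]
    have e : ((-2:ℝ) + 1) = -1 := by norm_num
    rw [e, rpow_neg_one, inv_div]
    ring
  rw [hval] at hmonoI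
  have hπ : 0 < 1 / π := by positivity
  have := mul_le_mul_of_nonneg_left hmonoI hπ.le
  calc (1 / π) * ∫ η in Ioi (ξ / 2), (ω (2 * η + ξ) - ω (2 * η - ξ) - 2 * ω ξ) / η ^ 2
      ≤ (1 / π) * (-(ω ξ) / ξ) := this
    _ = -(1 / π) * (ω ξ / ξ) := by ring
end

section
/- Define ω : [0,∞) → ℝ by ω(ξ) = ξ − ξ^{3/2} for 0 ≤ ξ ≤ δ, and for ξ > δ by ω(ξ) = ω(δ) + ∫_δ^ξ γ/(η(4 + log(η/δ))) dη, where 0 < γ < δ. Then for δ sufficiently small, ω is concave and strictly increasing on [0,∞). -/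
open MeasureTheory Set Real

/-- The Kiselev–Nazarov–Volberg modulus of continuity. -/
noncomputable def knv (δ γ : ℝ) (ξ : ℝ) : ℝ :=
  if ξ ≤ δ then ξ - ξ ^ ((3:ℝ)/2)
  else (δ - δ ^ ((3:ℝ)/2)) + ∫ η in Ioc δ ξ, γ / (η * (4 + Real.log (η / δ)))

/-- The (a.e.) derivative of `knv`. -/
noncomputable def knvD (δ γ : ℝ) (η : ℝ) : ℝ :=
  if η ≤ δ then 1 - (3/2) * η ^ ((1:ℝ)/2)
  else γ / (η * (4 + Real.log (η / δ)))

section aux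

variable {δ γ : ℝ} (hδ : 0 < δ) (hδ4 : δ < 1/4) (hγ : 0 < γ) (hγδ : γ < δ)

lemma quarter_rpow : ((1:ℝ)/4) ^ ((1:ℝ)/2) = 1/2 := by
  rw [show (1:ℝ)/4 = ((1:ℝ)/2) ^ ((2:ℕ):ℝ) by
        rw [Real.rpow_natCast]; norm_num,
      ← Real.rpow_mul (by norm_num)]
  norm_num

include hδ4 in
lemma branch1_bound {η : ℝ} (h0 : 0 ≤ η) (h1 : η ≤ δ) :
    (1:ℝ)/4 < 1 - (3/2) * η ^ ((1:ℝ)/2) := by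
  have h2 : η ^ ((1:ℝ)/2) < ((1:ℝ)/4) ^ ((1:ℝ)/2) :=
    Real.rpow_lt_rpow h0 (lt_of_le_of_lt h1 hδ4) (by norm_num)
  rw [quarter_rpow] at h2
  nlinarith

include hδ in
lemma branch2_denom_pos {η : ℝ} (h : δ < η) : 0 < η * (4 + Real.log (η / δ)) := by
  have h1 : (0:ℝ) < Real.log (η / δ) := Real.log_pos ((one_lt_div hδ).2 h)
  have h2 : 0 < η := hδ.trans h
  nlinarith

include hδ hγ in
lemma branch2_pos {η : ℝ} (h : δ < η) : 0 < γ / (η * (4 + Real.log (η / δ))) :=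
  div_pos hγ (branch2_denom_pos hδ h)

include hδ hγ hγδ in
lemma branch2_lt {η : ℝ} (h : δ < η) : γ / (η * (4 + Real.log (η / δ))) < 1/4 := by
  have h1 : (0:ℝ) ≤ Real.log (η / δ) := (Real.log_pos ((one_lt_div hδ).2 h)).le
  have h2 : 0 < η := hδ.trans h
  rw [div_lt_iff₀ (branch2_denom_pos hδ h)]
  nlinarith

include hδ hγ in
lemma branch2_anti {a b : ℝ} (ha : δ < a) (hab : a ≤ b) :
    γ / (b * (4 + Real.log (b / δ))) ≤ γ / (a * (4 + Real.log (a / δ))) := by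
  have h0a : 0 < a := hδ.trans ha
  have hlog : Real.log (a / δ) ≤ Real.log (b / δ) :=
    Real.log_le_log (div_pos h0a hδ) (by gcongr)
  have hla : 0 ≤ Real.log (a / δ) := (Real.log_pos ((one_lt_div hδ).2 ha)).le
  apply div_le_div_of_nonneg_left hγ.le (branch2_denom_pos hδ ha)
  nlinarith

include hδ hδ4 hγ hγδ in
/-- `knvD` is positive on `[0, ∞)`. -/
lemma knvD_pos {η : ℝ} (h0 : 0 ≤ η) : 0 < knvD δ γ η := by
  unfold knvD
  split_ifs with h
  · linarith [branch1_bound hδ4 h0 h]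
  · exact branch2_pos hδ hγ (not_le.mp h)

include hδ hδ4 hγ hγδ in
/-- `knvD` is antitone on `[0, ∞)`. -/
lemma knvD_anti {a b : ℝ} (h0 : 0 ≤ a) (hab : a ≤ b) : knvD δ γ b ≤ knvD δ γ a := by
  unfold knvD
  split_ifs with hb ha ha
  · have h1 : a ^ ((1:ℝ)/2) ≤ b ^ ((1:ℝ)/2) := Real.rpow_le_rpow h0 hab (by norm_num)
    nlinarith
  · exact absurd (hab.trans hb) ha
  · have := branch2_lt hδ hγ hγδ (not_le.mp hb)
    have := branch1_bound hδ4 h0 ha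
    linarith
  · exact branch2_anti hδ hγ (not_le.mp ha) hab

include hδ hδ4 hγ hγδ in
lemma knvD_antitoneOn {x y : ℝ} (h0 : 0 ≤ x) : AntitoneOn (knvD δ γ) (Icc x y) :=
  fun a ha b hb hab => knvD_anti hδ hδ4 hγ hγδ (h0.trans ha.1) hab

include hδ hδ4 hγ hγδ in
lemma knvD_integrableOn {x y : ℝ} (h0 : 0 ≤ x) :
    IntegrableOn (knvD δ γ) (Ioc x y) := by
  refine IntegrableOn.mono_set ?_ Ioc_subset_Icc_self
  exact AntitoneOn.integrableOn_isCompact isCompact_Icc (knvD_antitoneOn hδ hδ4 hγ hγδ h0)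

lemma knvD_eq_branch1 {η : ℝ} (h : η ≤ δ) : knvD δ γ η = 1 - (3/2) * η ^ ((1:ℝ)/2) :=
  if_pos h

include hδ in
/-- Fundamental theorem of calculus for `knv`. -/
lemma knv_sub (hδ4 : δ < 1/4) (hγ : 0 < γ) (hγδ : γ < δ) {x y : ℝ} (h0 : 0 ≤ x) (hxy : x ≤ y) :
    knv δ γ y - knv δ γ x = ∫ η in Ioc x y, knvD δ γ η := by
  -- first: the case `y ≤ δ` as a general claim
  have key : ∀ a b : ℝ, 0 ≤ a → a ≤ b → b ≤ δ →
      (b - b ^ ((3:ℝ)/2)) - (a - a ^ ((3:ℝ)/2)) = ∫ η in Ioc a b, knvD δ γ η := by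
    intro a b ha hab hbδ
    have hcong : ∫ η in Ioc a b, knvD δ γ η
        = ∫ η in Ioc a b, (1 - (3/2) * η ^ ((1:ℝ)/2)) := by
      refine setIntegral_congr_fun measurableSet_Ioc fun η hη => ?_
      exact knvD_eq_branch1 (hη.2.trans hbδ)
    rw [hcong, ← intervalIntegral.integral_of_le hab]
    have hderiv : ∀ t ∈ uIcc a b,
        HasDerivAt (fun t : ℝ => t - t ^ ((3:ℝ)/2)) (1 - (3/2) * t ^ ((1:ℝ)/2)) t := by
      intro t _
      have h1 : HasDerivAt (fun t : ℝ => t ^ ((3:ℝ)/2)) ((3:ℝ)/2 * t ^ ((3:ℝ)/2 - 1)) t :=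
        Real.hasDerivAt_rpow_const (Or.inr (by norm_num))
      have h2 : (3:ℝ)/2 - 1 = 1/2 := by norm_num
      rw [h2] at h1
      exact (hasDerivAt_id' t).sub h1
    have hcont : IntervalIntegrable (fun η : ℝ => 1 - (3/2) * η ^ ((1:ℝ)/2))
        volume a b := by
      apply Continuous.intervalIntegrable
      have : Continuous fun η : ℝ => η ^ ((1:ℝ)/2) :=
        Real.continuous_rpow_const (by norm_num)
      continuity
    exact (intervalIntegral.integral_eq_sub_of_hasDerivAt hderiv hcont).symm
  -- splitting lemma
  have split : ∀ a b c : ℝ, 0 ≤ a → a ≤ b → b ≤ c →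
      (∫ η in Ioc a b, knvD δ γ η) + (∫ η in Ioc b c, knvD δ γ η)
        = ∫ η in Ioc a c, knvD δ γ η := by
    intro a b c ha hab hbc
    rw [← setIntegral_union (Set.Ioc_disjoint_Ioc_of_le le_rfl) measurableSet_Ioc
      (knvD_integrableOn hδ hδ4 hγ hγδ ha) (knvD_integrableOn hδ hδ4 hγ hγδ (ha.trans hab)),
      Set.Ioc_union_Ioc_eq_Ioc hab hbc]
  -- `knv` beyond δ
  have beyond : ∀ b : ℝ, δ < b → knv δ γ b - knv δ γ δ = ∫ η in Ioc δ b, knvD δ γ η := by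
    intro b hb
    have h1 : knv δ γ δ = δ - δ ^ ((3:ℝ)/2) := if_pos le_rfl
    have h2 : knv δ γ b = (δ - δ ^ ((3:ℝ)/2)) + ∫ η in Ioc δ b, γ / (η * (4 + Real.log (η / δ))) :=
      if_neg (not_le.2 hb)
    have hcong : ∫ η in Ioc δ b, γ / (η * (4 + Real.log (η / δ)))
        = ∫ η in Ioc δ b, knvD δ γ η := by
      refine setIntegral_congr_fun measurableSet_Ioc fun η hη => ?_
      exact (if_neg (not_le.2 hη.1)).symm
    rw [h1, h2, hcong]; ring
  by_cases hy : y ≤ δ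
  · have hx : x ≤ δ := hxy.trans hy
    rw [show knv δ γ y = y - y ^ ((3:ℝ)/2) from if_pos hy,
      show knv δ γ x = x - x ^ ((3:ℝ)/2) from if_pos hx]
    exact key x y h0 hxy hy
  · push_neg at hy
    by_cases hx : x ≤ δ
    · have e1 : knv δ γ δ - knv δ γ x = ∫ η in Ioc x δ, knvD δ γ η := by
        rw [show knv δ γ δ = δ - δ ^ ((3:ℝ)/2) from if_pos le_rfl,
          show knv δ γ x = x - x ^ ((3:ℝ)/2) from if_pos hx]
        exact key x δ h0 hx le_rfl
      have e2 := beyond y hy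
      have := split x δ y h0 hx hy.le
      linarith
    · push_neg at hx
      have e1 := beyond x hx
      have e2 := beyond y (hx.trans_le hxy)
      have := split δ x y hδ.le hx.le hxy
      linarith

include hδ hδ4 hγ hγδ in
/-- Lower bound for increments. -/
lemma knv_incr_lower {x y : ℝ} (h0 : 0 ≤ x) (hxy : x ≤ y) :
    (y - x) * knvD δ γ y ≤ knv δ γ y - knv δ γ x := by
  rw [knv_sub hδ hδ4 hγ hγδ h0 hxy]
  have h1 : (∫ _η in Ioc x y, knvD δ γ y) ≤ ∫ η in Ioc x y, knvD δ γ η := by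
    refine setIntegral_mono_on (integrableOn_const measure_Ioc_lt_top.ne)
      (knvD_integrableOn hδ hδ4 hγ hγδ h0) measurableSet_Ioc fun η hη => ?_
    exact knvD_anti hδ hδ4 hγ hγδ (h0.trans hη.1.le) hη.2
  calc (y - x) * knvD δ γ y = ∫ _η in Ioc x y, knvD δ γ y := by
        rw [setIntegral_const, Real.volume_real_Ioc_of_le hxy,
          smul_eq_mul]
      _ ≤ _ := h1

include hδ hδ4 hγ hγδ in
/-- Upper bound for increments. -/
lemma knv_incr_upper {x y : ℝ} (h0 : 0 ≤ x) (hxy : x ≤ y) :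
    knv δ γ y - knv δ γ x ≤ (y - x) * knvD δ γ x := by
  rw [knv_sub hδ hδ4 hγ hγδ h0 hxy]
  have h1 : (∫ η in Ioc x y, knvD δ γ η) ≤ ∫ _η in Ioc x y, knvD δ γ x := by
    refine setIntegral_mono_on (knvD_integrableOn hδ hδ4 hγ hγδ h0)
      (integrableOn_const measure_Ioc_lt_top.ne) measurableSet_Ioc fun η hη => ?_
    exact knvD_anti hδ hδ4 hγ hγδ h0 hη.1.le
  calc (∫ η in Ioc x y, knvD δ γ η) ≤ ∫ _η in Ioc x y, knvD δ γ x := h1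
      _ = (y - x) * knvD δ γ x := by
        rw [setIntegral_const, Real.volume_real_Ioc_of_le hxy,
          smul_eq_mul]

end aux

theorem knv_concave_strictMono :
    ∃ δ₀ > 0, ∀ δ γ : ℝ, 0 < δ → δ < δ₀ → 0 < γ → γ < δ →
      ConcaveOn ℝ (Ici 0) (knv δ γ) ∧ StrictMonoOn (knv δ γ) (Ici 0) := by
  refine ⟨1/4, by norm_num, fun δ γ hδ hδ4 hγ hγδ => ⟨?_, ?_⟩⟩
  · refine concaveOn_of_slope_anti_adjacent (convex_Ici 0) ?_
    intro x y z hx _hz hxy hyz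
    have hy0 : (0:ℝ) ≤ y := le_of_lt (lt_of_le_of_lt hx hxy)
    have h1 : knv δ γ z - knv δ γ y ≤ (z - y) * knvD δ γ y :=
      knv_incr_upper hδ hδ4 hγ hγδ hy0 hyz.le
    have h2 : (y - x) * knvD δ γ y ≤ knv δ γ y - knv δ γ x :=
      knv_incr_lower hδ hδ4 hγ hγδ hx hxy.le
    have hzy : (0:ℝ) < z - y := by linarith
    have hyx : (0:ℝ) < y - x := by linarith
    calc (knv δ γ z - knv δ γ y) / (z - y) ≤ knvD δ γ y := by
          rw [div_le_iff₀ hzy]; linarith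
      _ ≤ (knv δ γ y - knv δ γ x) / (y - x) := by
          rw [le_div_iff₀ hyx]; linarith
  · intro x hx y _hy hxy
    have h1 : (y - x) * knvD δ γ y ≤ knv δ γ y - knv δ γ x :=
      knv_incr_lower hδ hδ4 hγ hγδ hx hxy.le
    have h2 : 0 < knvD δ γ y := knvD_pos hδ hδ4 hγ hγδ (le_of_lt (lt_of_le_of_lt hx hxy))
    nlinarith
end

section
/- Let ω be a modulus of continuity with ω'(0+) finite and lim_{ξ→0+} ω''(ξ) = −∞ (in the sense that (ω(ξ) − ω'(0)ξ)/ξ² → −∞ as ξ → 0+). If f : ℝⁿ → ℝ is a C² periodic function satisfying |f(x) − f(y)| ≤ ω(|x − y|) for all x, y, then ‖∇f‖_∞ < ω'(0+). -/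
open Set Filter

theorem gradient_strict_bound_of_modulus
    (n : ℕ) (f : EuclideanSpace ℝ (Fin n) → ℝ)
    (hf : ContDiff ℝ 2 f)
    (b : Module.Basis (Fin n) ℝ (EuclideanSpace ℝ (Fin n)))
    (hper : ∀ i : Fin n, ∀ x, f (x + b i) = f x)
    (ω ρ : ℝ → ℝ)
    (hconc : ConcaveOn ℝ (Ici 0) ω)
    (hmono : MonotoneOn ω (Ici 0))
    (hcont : ContinuousOn ω (Ici 0))
    (h0 : ω 0 = 0)
    (D : ℝ) (hD : 0 ≤ D)
    (hρ : ∀ ξ > (0:ℝ), ω ξ = D * ξ - ρ ξ * ξ ^ 2)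
    (hρtop : Tendsto ρ (nhdsWithin 0 (Ioi 0)) atTop)
    (hmod : ∀ x y, |f x - f y| ≤ ω ‖x - y‖) :
    ∀ x, ‖gradient f x‖ < D := by
  have hDpos : 0 < D := by
    obtain ⟨t, htρ, ht0⟩ :=
      ((hρtop.eventually (eventually_gt_atTop 0)).and self_mem_nhdsWithin).exists
    have ht0 : (0:ℝ) < t := ht0
    have hωt : 0 ≤ ω t := by
      rw [← h0]; exact hmono (mem_Ici.mpr le_rfl) (mem_Ici.mpr ht0.le) ht0.le
    have := hρ t ht0
    nlinarith [mul_pos (mul_pos htρ ht0) ht0, mul_pos ht0 ht0]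
  intro x
  set g := gradient f x with hg
  rcases eq_or_ne g 0 with hg0 | hg0
  · simpa [hg0] using hDpos
  -- main case
  have hgn : 0 < ‖g‖ := norm_pos_iff.mpr hg0
  set v : EuclideanSpace ℝ (Fin n) := ‖g‖⁻¹ • g with hv
  have hvn : ‖v‖ = 1 := norm_smul_inv_norm hg0
  set c : ℝ → EuclideanSpace ℝ (Fin n) := fun t => x + t • v with hcdef
  have hc : ∀ t : ℝ, HasDerivAt c v t := by
    intro t
    rw [hcdef]; simpa using (((hasDerivAt_id t).smul_const v).const_add x)
  have hfd : Differentiable ℝ f := hf.differentiable (by norm_num)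
  set φ : ℝ → ℝ := fun t => f (c t) with hφdef
  set φ' : ℝ → ℝ := fun t => fderiv ℝ f (c t) v with hφ'def
  have hφ : ∀ t, HasDerivAt φ (φ' t) t := fun t =>
    ((hfd (c t)).hasFDerivAt).comp_hasDerivAt t (hc t)
  have hF : ContDiff ℝ 1 (fderiv ℝ f) := hf.fderiv_right (by norm_num)
  have hFd : Differentiable ℝ (fderiv ℝ f) := hF.differentiable (by norm_num)
  have hφ' : ∀ t, HasDerivAt φ' ((fderiv ℝ (fderiv ℝ f) (c t) v) v) t := by
    intro t
    have h1 : HasDerivAt (fun t => fderiv ℝ f (c t)) (fderiv ℝ (fderiv ℝ f) (c t) v) t :=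
      ((hFd (c t)).hasFDerivAt).comp_hasDerivAt t (hc t)
    simpa using h1.clm_apply (hasDerivAt_const t v)
  -- bound for the second derivative on [0,1]
  have hcont2 : Continuous fun t : ℝ => (fderiv ℝ (fderiv ℝ f) (c t) v) v := by
    have hcc : Continuous c := by
      fun_prop
    exact ((hF.continuous_fderiv (by norm_num)).comp hcc).clm_apply continuous_const
      |>.clm_apply continuous_const
  obtain ⟨M, hM⟩ := (isCompact_Icc (a := (0:ℝ)) (b := 1)).exists_bound_of_continuousOn
    hcont2.norm.continuousOn
  have hM0 : 0 ≤ M := by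
    have h := hM 0 ⟨le_rfl, zero_le_one⟩
    rw [norm_norm] at h
    exact le_trans (norm_nonneg _) h
  -- first-order bound on φ' over [0,1]
  have hlip : ∀ s ∈ Icc (0:ℝ) 1, ‖φ' s - φ' 0‖ ≤ M * ‖s - 0‖ := by
    intro s hs
    exact (convex_Icc (0:ℝ) 1).norm_image_sub_le_of_norm_hasDerivWithin_le
      (fun u hu => (hφ' u).hasDerivWithinAt)
      (fun u hu => by simpa using hM u hu) ⟨le_rfl, zero_le_one⟩ hs
  -- key inequality for each t ∈ (0,1]
  have key : ∀ t : ℝ, 0 < t → t ≤ 1 → t * φ' 0 - M * t ^ 2 ≤ ω t := by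
    intro t ht0 ht1
    set ψ : ℝ → ℝ := fun s => φ s - s * φ' 0 with hψdef
    have hψ : ∀ s, HasDerivAt ψ (φ' s - φ' 0) s := fun s =>
      (hφ s).sub (hasDerivAt_mul_const (φ' 0))
    have hψb : ‖ψ t - ψ 0‖ ≤ (M * t) * ‖t - 0‖ := by
      apply (convex_Icc (0:ℝ) t).norm_image_sub_le_of_norm_hasDerivWithin_le
        (fun u hu => (hψ u).hasDerivWithinAt)
        (fun u hu => ?_) ⟨le_rfl, ht0.le⟩ ⟨ht0.le, le_rfl⟩
      have hu1 : u ∈ Icc (0:ℝ) 1 := ⟨hu.1, hu.2.trans ht1⟩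
      calc ‖φ' u - φ' 0‖ ≤ M * ‖u - 0‖ := hlip u hu1
        _ ≤ M * t := by
            have : ‖u - 0‖ ≤ t := by
              rw [sub_zero, Real.norm_eq_abs, abs_of_nonneg hu.1]; exact hu.2
            exact mul_le_mul_of_nonneg_left this hM0
    have hψself : ψ t - ψ 0 = φ t - φ 0 - t * φ' 0 := by
      simp only [hψdef]; ring
    have hb : |φ t - φ 0 - t * φ' 0| ≤ M * t ^ 2 := by
      rw [← hψself]
      calc |ψ t - ψ 0| ≤ (M * t) * ‖t - 0‖ := hψb
        _ = M * t ^ 2 := by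
            rw [sub_zero, Real.norm_eq_abs, abs_of_nonneg ht0.le]; ring
    have h1 : t * φ' 0 - M * t ^ 2 ≤ φ t - φ 0 := by
      have := abs_le.mp hb
      linarith [this.1]
    have h2 : φ t - φ 0 ≤ ω t := by
      have := hmod (c t) (c 0)
      have hd : ‖c t - c 0‖ = t := by
        simp only [hcdef]
        rw [show (x + t • v) - (x + (0:ℝ) • v) = t • v by module]
        rw [norm_smul, hvn, Real.norm_eq_abs, abs_of_nonneg ht0.le, mul_one]
      rw [hd] at this
      calc φ t - φ 0 ≤ |f (c t) - f (c 0)| := le_abs_self _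
        _ ≤ ω t := this
    linarith
  -- compute φ' 0 = ‖g‖
  have hφ'0 : φ' 0 = ‖g‖ := by
    have hc0 : c 0 = x := by simp [hcdef]
    have h1 : φ' 0 = fderiv ℝ f x v := by simp only [hφ'def]; rw [hc0]
    have h2 : (inner ℝ g v : ℝ) = fderiv ℝ f x v := by
      rw [hg, gradient]; exact InnerProductSpace.toDual_symm_apply
    rw [h1, ← h2, hv, real_inner_smul_right, real_inner_self_eq_norm_sq]
    field_simp
  -- choose t small with ρ t > M
  have hmem : Ioo (0:ℝ) 1 ∈ nhdsWithin (0:ℝ) (Ioi 0) := Ioo_mem_nhdsGT_of_mem ⟨le_rfl, one_pos⟩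
  obtain ⟨t, htρ, ht01⟩ :=
    ((hρtop.eventually (eventually_gt_atTop M)).and (eventually_of_mem hmem fun y hy => hy)).exists
  have ht0 : (0:ℝ) < t := ht01.1
  have ht1 : t ≤ 1 := ht01.2.le
  have hkey := key t ht0 ht1
  rw [hφ'0, hρ t ht0] at hkey
  -- t * ‖g‖ - M t² ≤ D t - ρ t t²  ⇒ ‖g‖ ≤ D - (ρ t - M) t < D
  have h3 : ‖g‖ ≤ D - (ρ t - M) * t := by
    have h4 : t * ‖g‖ ≤ (D - (ρ t - M) * t) * t := by nlinarith
    have := le_of_mul_le_mul_right (by linarith [h4] : ‖g‖ * t ≤ (D - (ρ t - M) * t) * t) ht0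
    exact this
  have h5 : 0 < (ρ t - M) * t := mul_pos (by linarith) ht0
  linarith
end

section
/- Let ω and Ω be moduli of continuity and θ : ℝ² → ℝ be C¹ with modulus of continuity ω, and let u : ℝ² → ℝ² have modulus of continuity Ω. Suppose θ(x) − θ(y) = ω(ξ) with ξ = |x−y| > 0 and ω is differentiable at ξ. Then (u·∇θ)(x) − (u·∇θ)(y) ≤ Ω(ξ) ω'(ξ). -/
open Set

theorem flow_term_estimate
    (θ : EuclideanSpace ℝ (Fin 2) → ℝ) (hθ : ContDiff ℝ 1 θ)
    (u : EuclideanSpace ℝ (Fin 2) → EuclideanSpace ℝ (Fin 2))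
    (ω Ω : ℝ → ℝ)
    (hωconc : ConcaveOn ℝ (Ici 0) ω) (hωmono : MonotoneOn ω (Ici 0))
    (hωcont : ContinuousOn ω (Ici 0)) (hω0 : ω 0 = 0)
    (hΩconc : ConcaveOn ℝ (Ici 0) Ω) (hΩmono : MonotoneOn Ω (Ici 0))
    (hΩcont : ContinuousOn Ω (Ici 0)) (hΩ0 : Ω 0 = 0)
    (hmodθ : ∀ p q, |θ p - θ q| ≤ ω ‖p - q‖)
    (hmodu : ∀ p q, ‖u p - u q‖ ≤ Ω ‖p - q‖)
    (x y : EuclideanSpace ℝ (Fin 2)) (ξ : ℝ) (hξdef : ξ = ‖x - y‖) (hξ : 0 < ξ)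
    (htouch : θ x - θ y = ω ξ)
    (d : ℝ) (hd : HasDerivAt ω d ξ) :
    fderiv ℝ θ x (u x) - fderiv ℝ θ y (u y) ≤ Ω ξ * d := by
  have hΩξ : 0 ≤ Ω ξ := by
    have := hΩmono (le_refl (0:ℝ)) (le_of_lt hξ) hξ.le
    simpa [hΩ0] using this
  set f : ℝ → ℝ := fun h => θ (x + h • u x) - θ (y + h • u y) with hf
  set g : ℝ → ℝ := fun h => ω (ξ + h * Ω ξ) with hg
  -- derivative of f at 0
  have hθdiff : Differentiable ℝ θ := hθ.differentiable one_ne_zero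
  have hcx : HasDerivAt (fun h : ℝ => x + h • u x) (u x) 0 := by
    simpa using ((hasDerivAt_id (0:ℝ)).smul_const (u x)).const_add x
  have hcy : HasDerivAt (fun h : ℝ => y + h • u y) (u y) 0 := by
    simpa using ((hasDerivAt_id (0:ℝ)).smul_const (u y)).const_add y
  have hfx : HasDerivAt (fun h : ℝ => θ (x + h • u x)) (fderiv ℝ θ x (u x)) 0 := by
    have hx0 : HasFDerivAt θ (fderiv ℝ θ x) (x + (0:ℝ) • u x) := by
      simpa using (hθdiff x).hasFDerivAt
    simpa [Function.comp_def] using hx0.comp_hasDerivAt 0 hcx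
  have hfy : HasDerivAt (fun h : ℝ => θ (y + h • u y)) (fderiv ℝ θ y (u y)) 0 := by
    have hy0 : HasFDerivAt θ (fderiv ℝ θ y) (y + (0:ℝ) • u y) := by
      simpa using (hθdiff y).hasFDerivAt
    simpa [Function.comp_def] using hy0.comp_hasDerivAt 0 hcy
  have hfd : HasDerivAt f (fderiv ℝ θ x (u x) - fderiv ℝ θ y (u y)) 0 := hfx.sub hfy
  -- derivative of g at 0
  have hgd : HasDerivAt g (Ω ξ * d) 0 := by
    have hlin : HasDerivAt (fun h : ℝ => ξ + h * Ω ξ) (Ω ξ) 0 := by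
      simpa using ((hasDerivAt_id (0:ℝ)).mul_const (Ω ξ)).const_add ξ
    have hd' : HasDerivAt ω d (ξ + (0:ℝ) * Ω ξ) := by simpa using hd
    have := hd'.comp (0:ℝ) hlin
    simpa [Function.comp_def, mul_comm] using this
  -- f ≤ g for h ≥ 0, equality at 0
  have heq : f 0 = g 0 := by simp [hf, hg, htouch]
  have hle : ∀ h : ℝ, 0 ≤ h → f h ≤ g h := by
    intro h hh
    have h1 : f h ≤ ω ‖(x + h • u x) - (y + h • u y)‖ :=
      le_trans (le_abs_self _) (hmodθ _ _)
    have hnorm : ‖(x + h • u x) - (y + h • u y)‖ ≤ ξ + h * Ω ξ := by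
      have : (x + h • u x) - (y + h • u y) = (x - y) + h • (u x - u y) := by
        simp [smul_sub]; abel
      rw [this]
      calc ‖(x - y) + h • (u x - u y)‖ ≤ ‖x - y‖ + ‖h • (u x - u y)‖ := norm_add_le _ _
        _ = ξ + h * ‖u x - u y‖ := by
            rw [norm_smul, Real.norm_eq_abs, abs_of_nonneg hh, hξdef]
        _ ≤ ξ + h * Ω ξ := by
            have := hmodu x y
            rw [← hξdef] at this
            nlinarith
    have h2 : ω ‖(x + h • u x) - (y + h • u y)‖ ≤ ω (ξ + h * Ω ξ) := by
      apply hωmono (norm_nonneg _) _ hnorm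
      have : (0:ℝ) ≤ ξ + h * Ω ξ := by nlinarith
      exact this
    exact le_trans h1 h2
  -- compare right derivatives
  set φ : ℝ → ℝ := fun h => f h - g h with hφ
  have hφd : HasDerivAt φ (fderiv ℝ θ x (u x) - fderiv ℝ θ y (u y) - Ω ξ * d) 0 :=
    hfd.sub hgd
  have hslope : Filter.Tendsto (slope φ 0) (nhdsWithin 0 {(0:ℝ)}ᶜ)
      (nhds (fderiv ℝ θ x (u x) - fderiv ℝ θ y (u y) - Ω ξ * d)) :=
    hasDerivAt_iff_tendsto_slope.mp hφd
  have hslope' : Filter.Tendsto (slope φ 0) (nhdsWithin 0 (Ioi 0))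
      (nhds (fderiv ℝ θ x (u x) - fderiv ℝ θ y (u y) - Ω ξ * d)) :=
    hslope.mono_left (nhdsWithin_mono 0 (fun z hz => ne_of_gt hz))
  have hkey : fderiv ℝ θ x (u x) - fderiv ℝ θ y (u y) - Ω ξ * d ≤ 0 := by
    refine le_of_tendsto hslope' ?_
    filter_upwards [self_mem_nhdsWithin] with h hh
    have hh0 : (0:ℝ) < h := hh
    have hφh : φ h ≤ 0 := by
      have := hle h hh0.le
      simp [hφ]; linarith
    have hφ0 : φ 0 = 0 := by simp [hφ, heq]
    rw [slope_def_field]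
    simp only [hφ0, sub_zero]
    exact div_nonpos_of_nonpos_of_nonneg hφh hh0.le
  linarith
end

section
/- With ω as in the KNV construction and 0 < γ < δ/2, δ small enough, for all ξ ≥ δ: ∫₀^ξ ω(η)/η dη ≤ ω(ξ)(2 + log(ξ/δ)) and ∫_ξ^∞ ω(η)/η² dη ≤ 2ω(ξ)/ξ. -/
open MeasureTheory Set Real

namespace KNVaux

open Filter Topology

/-- the density of knv above δ -/
noncomputable def f (δ γ η : ℝ) : ℝ := γ / (η * (4 + Real.log (η / δ)))

variable {δ γ : ℝ}

lemma denom_pos (hδ : 0 < δ) {η : ℝ} (hη : δ ≤ η) : 0 < η * (4 + Real.log (η / δ)) := by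
  have h1 : (0:ℝ) < η := lt_of_lt_of_le hδ hη
  have h2 : (0:ℝ) ≤ Real.log (η / δ) :=
    Real.log_nonneg ((one_le_div hδ).2 hη)
  positivity

lemma f_nonneg (hδ : 0 < δ) (hγ : 0 ≤ γ) {η : ℝ} (hη : δ ≤ η) : 0 ≤ f δ γ η :=
  div_nonneg hγ (denom_pos hδ hη).le

lemma f_contOn (hδ : 0 < δ) : ContinuousOn (f δ γ) (Ici δ) := by
  apply ContinuousOn.div continuousOn_const
  · exact ContinuousOn.mul continuousOn_id (by
      apply ContinuousOn.add continuousOn_const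
      apply ContinuousOn.log (ContinuousOn.div continuousOn_id continuousOn_const (fun x _ => hδ.ne'))
      intro x hx
      have hx0 : 0 < x := lt_of_lt_of_le hδ hx
      exact div_ne_zero hx0.ne' hδ.ne')
  · exact fun x hx => (denom_pos hδ hx).ne'

lemma f_integrableOn (hδ : 0 < δ) (b : ℝ) : IntegrableOn (f δ γ) (Ioc δ b) := by
  have h : Ioc δ b ⊆ Icc δ (max δ b) := fun x hx => ⟨hx.1.le, le_max_of_le_right hx.2⟩
  exact ((f_contOn hδ).mono (Icc_subset_Ici_self)).integrableOn_Icc.mono_set h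

lemma f_le (hδ : 0 < δ) (hγ : 0 ≤ γ) {η : ℝ} (hη : δ ≤ η) : f δ γ η ≤ γ / (4 * η) := by
  have h1 : (0:ℝ) < η := lt_of_lt_of_le hδ hη
  have h2 : (0:ℝ) ≤ Real.log (η / δ) := Real.log_nonneg ((one_le_div hδ).2 hη)
  apply div_le_div_of_nonneg_left hγ (by positivity)
  nlinarith

lemma knv_eq_of_ge (hδ : 0 < δ) {ξ : ℝ} (h : δ ≤ ξ) :
    knv δ γ ξ = (δ - δ ^ ((3:ℝ)/2)) + ∫ η in Ioc δ ξ, f δ γ η := by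
  rcases eq_or_lt_of_le h with rfl | h
  · simp [knv, f]
  · rw [knv, if_neg (not_le.2 h)]; rfl

/-- monotone extension helper -/
noncomputable def G (δ γ ξ : ℝ) : ℝ := ∫ η in Ioc δ (max δ ξ), f δ γ η

lemma G_mono (hδ : 0 < δ) (hγ : 0 ≤ γ) : Monotone (G δ γ) := by
  intro a b hab
  apply setIntegral_mono_set (f_integrableOn hδ _)
  · filter_upwards [ae_restrict_mem measurableSet_Ioc] with x hx
    exact f_nonneg hδ hγ hx.1.le
  · exact HasSubset.Subset.eventuallyLE (Ioc_subset_Ioc_right (max_le_max le_rfl hab))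

lemma G_nonneg (hδ : 0 < δ) (hγ : 0 ≤ γ) (ξ : ℝ) : 0 ≤ G δ γ ξ := by
  apply setIntegral_nonneg measurableSet_Ioc
  exact fun x hx => f_nonneg hδ hγ hx.1.le

lemma knv_eq_G (hδ : 0 < δ) {ξ : ℝ} (h : δ ≤ ξ) :
    knv δ γ ξ = (δ - δ ^ ((3:ℝ)/2)) + G δ γ ξ := by
  rw [knv_eq_of_ge hδ h, G, max_eq_right h]

lemma knv_mono (hδ : 0 < δ) (hγ : 0 ≤ γ) : MonotoneOn (knv δ γ) (Ici δ) := by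
  intro a ha b hb hab
  rw [knv_eq_G hδ ha, knv_eq_G hδ hb]
  exact (add_le_add_iff_left _).2 (G_mono hδ hγ hab)

lemma omega_delta_ge (hδ : 0 < δ) (hδ' : δ ≤ 1/4) : δ/2 ≤ δ - δ ^ ((3:ℝ)/2) := by
  have h1 : δ ^ ((3:ℝ)/2) = δ * δ ^ ((1:ℝ)/2) := by
    rw [show (3:ℝ)/2 = 1 + 1/2 by norm_num, Real.rpow_add hδ, Real.rpow_one]
  have h2 : δ ^ ((1:ℝ)/2) ≤ (1/4 : ℝ) ^ ((1:ℝ)/2) :=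
    Real.rpow_le_rpow hδ.le hδ' (by norm_num)
  have h3 : ((1:ℝ)/4) ^ ((1:ℝ)/2) = 1/2 := by
    rw [show (1/4 : ℝ) = (1/2)^(2:ℕ) by norm_num, ← Real.rpow_natCast,
      ← Real.rpow_mul (by norm_num)]
    norm_num
  rw [h1]
  nlinarith [Real.rpow_nonneg hδ.le ((1:ℝ)/2)]

lemma knv_ge (hδ : 0 < δ) (hδ' : δ ≤ 1/4) (hγ : 0 ≤ γ) {ξ : ℝ} (h : δ ≤ ξ) :
    δ/2 ≤ knv δ γ ξ := by
  rw [knv_eq_G hδ h]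
  have := G_nonneg hδ hγ ξ
  have := omega_delta_ge hδ hδ'
  linarith

lemma knv_pos (hδ : 0 < δ) (hδ' : δ ≤ 1/4) (hγ : 0 ≤ γ) {ξ : ℝ} (h : δ ≤ ξ) :
    0 < knv δ γ ξ := lt_of_lt_of_le (by positivity) (knv_ge hδ hδ' hγ h)

lemma integral_inv_Ioc (hδ : 0 < δ) {a b : ℝ} (ha : δ ≤ a) (hab : a ≤ b) :
    ∫ η in Ioc a b, 1 / η = Real.log b - Real.log a := by
  rw [← intervalIntegral.integral_of_le hab, integral_one_div]
  · rw [Real.log_div (by linarith) (by linarith)]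
  · intro h
    rcases (Set.mem_uIcc.1 h) with ⟨h1, _⟩ | ⟨_, h2⟩ <;> linarith

/-- key increment bound -/
lemma knv_incr (hδ : 0 < δ) (hγ : 0 ≤ γ) {a b : ℝ} (ha : δ ≤ a) (hab : a ≤ b) :
    knv δ γ b ≤ knv δ γ a + (γ/4) * (Real.log b - Real.log a) := by
  rw [knv_eq_of_ge hδ ha, knv_eq_of_ge hδ (ha.trans hab)]
  rw [← Ioc_union_Ioc_eq_Ioc ha hab,
    setIntegral_union (Ioc_disjoint_Ioc_of_le le_rfl) measurableSet_Ioc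
      ((f_integrableOn hδ b).mono_set (Ioc_subset_Ioc_right hab))
      ((f_integrableOn hδ b).mono_set (Ioc_subset_Ioc_left ha))]
  have hbound : ∫ η in Ioc a b, f δ γ η ≤ (γ/4) * (Real.log b - Real.log a) := by
    calc ∫ η in Ioc a b, f δ γ η ≤ ∫ η in Ioc a b, (γ/4) * (1/η) := by
          apply setIntegral_mono_on
            ((f_integrableOn hδ b).mono_set (Ioc_subset_Ioc_left ha))
            (by
              apply Integrable.const_mul
              have hcont : ContinuousOn (fun η : ℝ => 1/η) (Icc a b) := by
                apply ContinuousOn.div continuousOn_const continuousOn_id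
                intro x hx; exact (lt_of_lt_of_le (hδ.trans_le ha) hx.1).ne'
              exact hcont.integrableOn_Icc.mono_set Ioc_subset_Icc_self)
            measurableSet_Ioc
          intro x hx
          have hx1 : δ ≤ x := le_trans ha hx.1.le
          have hx0 : 0 < x := lt_of_lt_of_le hδ hx1
          calc f δ γ x ≤ γ/(4*x) := f_le hδ hγ hx1
            _ = (γ/4) * (1/x) := by field_simp
      _ = (γ/4) * ∫ η in Ioc a b, 1/η := by rw [integral_const_mul]
      _ = (γ/4) * (Real.log b - Real.log a) := by rw [integral_inv_Ioc hδ ha hab]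
  linarith

lemma knv_aesm (hδ : 0 < δ) (hγ : 0 ≤ γ) {s : Set ℝ} (hs : MeasurableSet s)
    (hsub : s ⊆ Ici δ) : AEStronglyMeasurable (knv δ γ) (volume.restrict s) := by
  have hm : Measurable (fun η => (δ - δ ^ ((3:ℝ)/2)) + G δ γ η) :=
    measurable_const.add (G_mono hδ hγ).measurable
  refine hm.aestronglyMeasurable.congr ?_
  filter_upwards [ae_restrict_mem hs] with x hx
  exact (knv_eq_G hδ (hsub hx)).symm

lemma part1 (hδ : 0 < δ) (hδ' : δ ≤ 1/4) (hγ : 0 < γ) {ξ : ℝ} (hξ : δ ≤ ξ) :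
    (∫ η in Ioc 0 ξ, knv δ γ η / η) ≤ knv δ γ ξ * (2 + Real.log (ξ / δ)) := by
  have hξ0 : 0 < ξ := hδ.trans_le hξ
  have hknvξ : δ/2 ≤ knv δ γ ξ := knv_ge hδ hδ' hγ.le hξ
  have hknvξ0 : 0 < knv δ γ ξ := knv_pos hδ hδ' hγ.le hξ
  -- the part on (0, δ]
  have hsqrt_int : IntegrableOn (fun η : ℝ => 1 - η ^ ((1:ℝ)/2)) (Ioc 0 δ) := by
    have h1 : IntegrableOn (fun η : ℝ => η ^ ((1:ℝ)/2)) (Ioc 0 δ) := by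
      have := intervalIntegral.intervalIntegrable_rpow' (a := 0) (b := δ)
        (r := (1:ℝ)/2) (by norm_num)
      rw [intervalIntegrable_iff_integrableOn_Ioc_of_le hδ.le] at this
      exact this
    exact (integrableOn_const measure_Ioc_lt_top.ne).sub h1
  have heq1 : EqOn (fun η : ℝ => knv δ γ η / η) (fun η : ℝ => 1 - η ^ ((1:ℝ)/2)) (Ioc 0 δ) := by
    intro x hx
    have hx0 : 0 < x := hx.1
    simp only [knv, if_pos hx.2]
    rw [show (3:ℝ)/2 = 1 + 1/2 by norm_num, Real.rpow_add hx0, Real.rpow_one]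
    field_simp
  have hI1 : (∫ η in Ioc 0 δ, knv δ γ η / η) ≤ δ := by
    rw [setIntegral_congr_fun measurableSet_Ioc heq1]
    calc (∫ η in Ioc 0 δ, (1 - η ^ ((1:ℝ)/2)))
        ≤ ∫ η in Ioc 0 δ, (1:ℝ) := by
          apply setIntegral_mono_on hsqrt_int
            (integrableOn_const measure_Ioc_lt_top.ne) measurableSet_Ioc
          intro x hx
          have : 0 ≤ x ^ ((1:ℝ)/2) := Real.rpow_nonneg hx.1.le _
          linarith
      _ = δ := by
          simp [Real.volume_Ioc, ENNReal.toReal_ofReal hδ.le, hδ.le]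
  -- the part on (δ, ξ]
  have hmeas2 : AEStronglyMeasurable (fun η : ℝ => knv δ γ η / η)
      (volume.restrict (Ioc δ ξ)) := by
    have hm : Measurable (fun η : ℝ => ((δ - δ ^ ((3:ℝ)/2)) + G δ γ η) / η) :=
      (measurable_const.add (G_mono hδ hγ.le).measurable).div measurable_id
    refine hm.aestronglyMeasurable.congr ?_
    filter_upwards [ae_restrict_mem measurableSet_Ioc] with x hx
    rw [← knv_eq_G hδ hx.1.le]
  have hinv_int : IntegrableOn (fun η : ℝ => 1/η) (Ioc δ ξ) := by
    have hcont : ContinuousOn (fun η : ℝ => 1/η) (Icc δ ξ) := by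
      apply ContinuousOn.div continuousOn_const continuousOn_id
      intro x hx; exact (hδ.trans_le hx.1).ne'
    exact hcont.integrableOn_Icc.mono_set Ioc_subset_Icc_self
  have hint2 : IntegrableOn (fun η : ℝ => knv δ γ η / η) (Ioc δ ξ) := by
    apply Integrable.mono
      (show IntegrableOn (fun _ : ℝ => knv δ γ ξ / δ) (Ioc δ ξ) volume from
        integrableOn_const measure_Ioc_lt_top.ne) hmeas2
    filter_upwards [ae_restrict_mem measurableSet_Ioc] with x hx
    have hx0 : 0 < x := hδ.trans hx.1
    have hknvx0 : 0 < knv δ γ x := knv_pos hδ hδ' hγ.le hx.1.le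
    have hmono := knv_mono hδ hγ.le hx.1.le (le_trans hx.1.le hx.2) hx.2
    rw [Real.norm_eq_abs, Real.norm_eq_abs, abs_of_nonneg (by positivity),
      abs_of_nonneg (by positivity)]
    exact div_le_div₀ hknvξ0.le hmono hδ hx.1.le
  have hI2 : (∫ η in Ioc δ ξ, knv δ γ η / η) ≤ knv δ γ ξ * (Real.log ξ - Real.log δ) := by
    calc (∫ η in Ioc δ ξ, knv δ γ η / η)
        ≤ ∫ η in Ioc δ ξ, knv δ γ ξ * (1/η) := by
          apply setIntegral_mono_on hint2 (hinv_int.const_mul _) measurableSet_Ioc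
          intro x hx
          have hx0 : 0 < x := hδ.trans hx.1
          have hmono := knv_mono hδ hγ.le hx.1.le (le_trans hx.1.le hx.2) hx.2
          rw [mul_one_div]
          gcongr
      _ = knv δ γ ξ * (Real.log ξ - Real.log δ) := by
          rw [integral_const_mul, integral_inv_Ioc hδ le_rfl hξ]
  -- combine
  have hsplit : (∫ η in Ioc 0 ξ, knv δ γ η / η)
      = (∫ η in Ioc 0 δ, knv δ γ η / η) + ∫ η in Ioc δ ξ, knv δ γ η / η := by
    rw [← Ioc_union_Ioc_eq_Ioc hδ.le hξ,
      setIntegral_union (Ioc_disjoint_Ioc_of_le le_rfl) measurableSet_Ioc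
        (hsqrt_int.congr ?_) hint2]
    filter_upwards [ae_restrict_mem measurableSet_Ioc] with x hx
    exact (heq1 hx).symm
  have hlog : Real.log (ξ / δ) = Real.log ξ - Real.log δ :=
    Real.log_div hξ0.ne' hδ.ne'
  have hlog0 : 0 ≤ Real.log (ξ / δ) := Real.log_nonneg ((one_le_div hδ).2 hξ)
  rw [hsplit, hlog]
  nlinarith [hI1, hI2]

lemma part2 (hδ : 0 < δ) (hδ' : δ ≤ 1/4) (hγ : 0 < γ) (hγ' : γ < δ/2) {ξ : ℝ} (hξ : δ ≤ ξ) :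
    (∫ η in Ioi ξ, knv δ γ η / η ^ 2) ≤ 2 * knv δ γ ξ / ξ := by
  have hξ0 : 0 < ξ := hδ.trans_le hξ
  set A := knv δ γ ξ with hA
  have hA0 : 0 < A := knv_pos hδ hδ' hγ.le hξ
  have hAδ : δ/2 ≤ A := knv_ge hδ hδ' hγ.le hξ
  set B := γ/4 with hB
  have hB0 : 0 < B := by positivity
  set C := A - B * Real.log ξ + B with hC
  set Φ : ℝ → ℝ := fun η => -(C + B * Real.log η) / η with hΦ
  set g : ℝ → ℝ := fun η => (A + B * (Real.log η - Real.log ξ)) / η ^ 2 with hg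
  have hderiv : ∀ x ∈ Ici ξ, HasDerivAt Φ (g x) x := by
    intro x hx
    have hx0 : 0 < x := hξ0.trans_le hx
    have h1 : HasDerivAt (fun η : ℝ => -(C + B * Real.log η)) (-(B * x⁻¹)) x :=
      (((Real.hasDerivAt_log hx0.ne').const_mul B).const_add C).neg
    have h2 : HasDerivAt (fun η : ℝ => η) 1 x := hasDerivAt_id x
    have h3 : HasDerivAt Φ ((-(B * x⁻¹) * x - -(C + B * Real.log x) * 1) / x ^ 2) x :=
      h1.div h2 hx0.ne'
    convert h3 using 1
    simp only [hg, hC]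
    field_simp
    ring
  have hnonneg : ∀ x ∈ Ioi ξ, 0 ≤ g x := by
    intro x hx
    have hx0 : 0 < x := hξ0.trans hx
    have hlog : Real.log ξ ≤ Real.log x := Real.log_le_log hξ0 (le_of_lt hx)
    have h4 : 0 ≤ A + B * (Real.log x - Real.log ξ) := by nlinarith
    simp only [hg]
    positivity
  have htend : Tendsto Φ atTop (𝓝 0) := by
    have t1 : Tendsto (fun η : ℝ => C / η) atTop (𝓝 0) :=
      tendsto_const_nhds.div_atTop tendsto_id
    have t2 : Tendsto (fun η : ℝ => Real.log η / η) atTop (𝓝 0) :=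
      Real.isLittleO_log_id_atTop.tendsto_div_nhds_zero
    have t3 : Tendsto (fun η : ℝ => -(C / η + B * (Real.log η / η))) atTop (𝓝 0) := by
      simpa using (t1.add (t2.const_mul B)).neg
    apply t3.congr'
    filter_upwards [eventually_gt_atTop (0:ℝ)] with x hx
    simp only [hΦ]
    field_simp
  have hval : ∫ x in Ioi ξ, g x = 0 - Φ ξ :=
    integral_Ioi_of_hasDerivAt_of_nonneg' hderiv hnonneg htend
  have hgint : IntegrableOn g (Ioi ξ) :=
    integrableOn_Ioi_deriv_of_nonneg' hderiv hnonneg htend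
  have hΦξ : (0:ℝ) - Φ ξ = (A + B) / ξ := by
    simp only [hΦ, hC]
    field_simp
    ring
  have hpt : ∀ x ∈ Ioi ξ, knv δ γ x / x ^ 2 ≤ g x := by
    intro x hx
    have hx0 : 0 < x := hξ0.trans hx
    have h := knv_incr hδ hγ.le hξ (le_of_lt hx)
    simp only [hg]
    gcongr
  have hknm : AEStronglyMeasurable (fun η : ℝ => knv δ γ η / η ^ 2)
      (volume.restrict (Ioi ξ)) := by
    have hm : Measurable (fun η : ℝ => ((δ - δ ^ ((3:ℝ)/2)) + G δ γ η) / η ^ 2) :=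
      (measurable_const.add (G_mono hδ hγ.le).measurable).div (measurable_id.pow_const 2)
    refine hm.aestronglyMeasurable.congr ?_
    filter_upwards [ae_restrict_mem measurableSet_Ioi] with x hx
    rw [← knv_eq_G hδ (hξ.trans (le_of_lt hx))]
  have hknvint : IntegrableOn (fun η : ℝ => knv δ γ η / η ^ 2) (Ioi ξ) := by
    apply Integrable.mono hgint hknm
    filter_upwards [ae_restrict_mem measurableSet_Ioi] with x hx
    have hx0 : 0 < x := hξ0.trans hx
    have hknvx0 : 0 < knv δ γ x := knv_pos hδ hδ' hγ.le (hξ.trans (le_of_lt hx))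
    rw [Real.norm_eq_abs, Real.norm_eq_abs, abs_of_nonneg (by positivity),
      abs_of_nonneg (hnonneg x hx)]
    exact hpt x hx
  calc (∫ η in Ioi ξ, knv δ γ η / η ^ 2)
      ≤ ∫ η in Ioi ξ, g η :=
        setIntegral_mono_on hknvint hgint measurableSet_Ioi hpt
    _ = (A + B) / ξ := by rw [hval, hΦξ]
    _ ≤ 2 * A / ξ := by
        have h5 : A + B ≤ 2 * A := by simp only [hB]; linarith
        exact (div_le_div_iff_of_pos_right hξ0).2 h5


end KNVaux

theorem knv_large_xi_integral_bounds :
    ∃ δ₀ > 0, ∀ δ γ : ℝ, 0 < δ → δ < δ₀ → 0 < γ → γ < δ / 2 →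
      ∀ ξ : ℝ, δ ≤ ξ →
        (∫ η in Ioc 0 ξ, knv δ γ η / η) ≤ knv δ γ ξ * (2 + Real.log (ξ / δ)) ∧
        (∫ η in Ioi ξ, knv δ γ η / η ^ 2) ≤ 2 * knv δ γ ξ / ξ := by
  refine ⟨1/4, by norm_num, ?_⟩
  intro δ γ hδ hδ' hγ hγ' ξ hξ
  exact ⟨KNVaux.part1 hδ hδ'.le hγ hξ, KNVaux.part2 hδ hδ'.le hγ hγ' hξ⟩
end
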